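/- Let D ⊂ ℝ^d have irreducible symmetry group and let T be an invertible d×d matrix. Then (1/d)·‖T^{-1}‖²_HS = [V(D)^{1+4/d}/I(D)] / [V(T(D))^{2/d} · V(T^{-⊤}(D))^{1+2/d} / I(T^{-⊤}(D))], where V denotes volume and I the second moment of mass about the centroid. -/

import Mathlib

open MeasureTheory Matrix

/-- The centroid of a set in `ℝ^d`. -/
noncomputable def centroid {d : ℕ} (Ω : Set (Fin d → ℝ)) : Fin d → ℝ :=
  ((volume Ω).toReal)⁻¹ • ∫ x in Ω, x ∂volume

/-- The second moment of mass of a set about its centroid. -/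
noncomputable def secondMoment {d : ℕ} (Ω : Set (Fin d → ℝ)) : ℝ :=
  ∫ x in Ω, ∑ i, (x i - centroid Ω i) ^ 2 ∂volume

/-- The volume of a set in `ℝ^d`, as a real number. -/
noncomputable def vol {d : ℕ} (Ω : Set (Fin d → ℝ)) : ℝ := (volume Ω).toReal

variable {d : ℕ}

lemma det_mulVecLin' (A : Matrix (Fin d) (Fin d) ℝ) :
    LinearMap.det A.mulVecLin = A.det := by
  rw [← Matrix.toLin'_apply', LinearMap.det_toLin']

lemma vol_image_mat (A : Matrix (Fin d) (Fin d) ℝ) (s : Set (Fin d → ℝ)) :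
    volume (A.mulVec '' s) = ENNReal.ofReal |A.det| * volume s := by
  have := MeasureTheory.Measure.addHaar_image_linearMap (μ := volume) A.mulVecLin s
  rw [det_mulVecLin'] at this; exact this

lemma integral_image_mat {F : Type*} [NormedAddCommGroup F] [NormedSpace ℝ F]
    (A : Matrix (Fin d) (Fin d) ℝ) (hA : IsUnit A.det)
    {s : Set (Fin d → ℝ)} (hs : MeasurableSet s) (g : (Fin d → ℝ) → F) :
    ∫ x in A.mulVec '' s, g x = |A.det| • ∫ x in s, g (A.mulVec x) := by
  have hinj : Set.InjOn A.mulVec s :=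
    (mulVec_injective_iff_isUnit.2 ((Matrix.isUnit_iff_isUnit_det A).2 hA)).injOn
  have hderiv : ∀ x ∈ s, HasFDerivWithinAt A.mulVec
      (LinearMap.toContinuousLinearMap A.mulVecLin) s x := fun x _ =>
    ((LinearMap.toContinuousLinearMap A.mulVecLin).hasFDerivAt.hasFDerivWithinAt)
  have h := MeasureTheory.integral_image_eq_integral_abs_det_fderiv_smul volume hs hderiv hinj g
  have hdet : (LinearMap.toContinuousLinearMap A.mulVecLin : _ →L[ℝ] _).det = A.det := by
    rw [ContinuousLinearMap.det]; simpa using det_mulVecLin' A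
  simp only [hdet] at h
  rw [h, ← integral_smul]

lemma integrableOn_cont {E : Type*} [NormedAddCommGroup E] {g : (Fin d → ℝ) → E}
    (hg : Continuous g) {D : Set (Fin d → ℝ)} (hbd : Bornology.IsBounded D) :
    IntegrableOn g D volume :=
  (hg.continuousOn.integrableOn_compact hbd.isCompact_closure).mono_set subset_closure

lemma vol_image_mat' (A : Matrix (Fin d) (Fin d) ℝ) {D : Set (Fin d → ℝ)}
    (hfin : volume D < ⊤) : vol (A.mulVec '' D) = |A.det| * vol D := by
  rw [vol, vol, vol_image_mat, ENNReal.toReal_mul, ENNReal.toReal_ofReal (abs_nonneg _)]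

lemma centroid_image (A : Matrix (Fin d) (Fin d) ℝ) (hA : IsUnit A.det)
    {D : Set (Fin d → ℝ)} (hm : MeasurableSet D) (hbd : Bornology.IsBounded D)
    (hfin : volume D < ⊤) :
    centroid (A.mulVec '' D) = A.mulVec (centroid D) := by
  have habs : (0:ℝ) < |A.det| := abs_pos.2 (by simpa using hA.ne_zero)
  have h1 : ∫ x in A.mulVec '' D, x ∂volume = |A.det| • ∫ x in D, A.mulVec x ∂volume :=
    integral_image_mat A hA hm _
  have h2 : ∫ x in D, A.mulVec x ∂volume = A.mulVec (∫ x in D, x ∂volume) := by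
    have := (LinearMap.toContinuousLinearMap A.mulVecLin).integral_comp_comm
      (μ := volume.restrict D) (φ := fun x => x) (integrableOn_cont continuous_id hbd)
    simpa using this
  rw [centroid, centroid, h1, h2, vol_image_mat A, ENNReal.toReal_mul,
    ENNReal.toReal_ofReal (abs_nonneg _), mul_inv, smul_smul]
  rw [mul_assoc, mul_comm _ |A.det|, ← mul_assoc, inv_mul_cancel₀ habs.ne', one_mul,
    Matrix.mulVec_smul]

noncomputable def covMat (D : Set (Fin d → ℝ)) : Matrix (Fin d) (Fin d) ℝ :=
  Matrix.of fun i j => ∫ x in D, (x i - centroid D i) * (x j - centroid D j) ∂volume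

lemma covMat_integrable (D : Set (Fin d → ℝ)) (hbd : Bornology.IsBounded D)
    (c : Fin d → ℝ) (k l : Fin d) :
    IntegrableOn (fun x => (x k - c k) * (x l - c l)) D volume :=
  integrableOn_cont (by fun_prop) hbd

lemma secondMoment_eq_trace (D : Set (Fin d → ℝ)) (hbd : Bornology.IsBounded D) :
    secondMoment D = ∑ i, covMat D i i := by
  rw [secondMoment, integral_finset_sum]
  · exact Finset.sum_congr rfl fun i _ => by
      simp only [covMat, Matrix.of_apply, sq]
  · exact fun i _ => by simp only [sq]; exact covMat_integrable D hbd (centroid D) i i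

lemma secondMoment_image (A : Matrix (Fin d) (Fin d) ℝ) (hA : IsUnit A.det)
    {D : Set (Fin d → ℝ)} (hm : MeasurableSet D) (hbd : Bornology.IsBounded D)
    (hfin : volume D < ⊤) :
    secondMoment (A.mulVec '' D)
      = |A.det| * ∑ i, ∑ k, ∑ l, A i k * A i l * covMat D k l := by
  set c := centroid D with hc
  rw [secondMoment, centroid_image A hA hm hbd hfin,
    integral_image_mat A hA hm (fun x => ∑ i, (x i - (A.mulVec c) i)^2), smul_eq_mul]
  congr 1
  have hpt : ∀ x : Fin d → ℝ, ∑ i, ((A.mulVec x) i - (A.mulVec c) i)^2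
      = ∑ i, ∑ k, ∑ l, A i k * A i l * ((x k - c k) * (x l - c l)) := by
    intro x
    refine Finset.sum_congr rfl fun i _ => ?_
    have h1 : (A.mulVec x) i - (A.mulVec c) i = ∑ k, A i k * (x k - c k) := by
      simp [Matrix.mulVec, dotProduct, mul_sub, Finset.sum_sub_distrib]
    rw [h1, sq, Finset.sum_mul_sum]
    exact Finset.sum_congr rfl fun k _ => Finset.sum_congr rfl fun l _ => by ring
  simp only [hpt]
  rw [integral_finset_sum _ (fun i _ => ?_)]
  · refine Finset.sum_congr rfl fun i _ => ?_
    rw [integral_finset_sum _ (fun k _ => ?_)]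
    · refine Finset.sum_congr rfl fun k _ => ?_
      rw [integral_finset_sum _ (fun l _ => ?_)]
      · exact Finset.sum_congr rfl fun l _ => by
          rw [integral_const_mul]; rfl
      · exact ((covMat_integrable D hbd c k l).const_mul _)
    · exact integrable_finset_sum _ (fun l _ => (covMat_integrable D hbd c k l).const_mul _)
  · exact integrable_finset_sum _ (fun k _ =>
      integrable_finset_sum _ (fun l _ => (covMat_integrable D hbd c k l).const_mul _))

lemma orth_abs_det {U : Matrix (Fin d) (Fin d) ℝ}
    (hU : U ∈ Matrix.orthogonalGroup (Fin d) ℝ) : |U.det| = 1 := by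
  have h := (Matrix.mem_orthogonalGroup_iff (Fin d) ℝ).1 hU
  have : U.det * U.det = 1 := by
    have := congrArg Matrix.det h
    rwa [Matrix.det_mul, Matrix.det_transpose,
      Matrix.det_one] at this
  nlinarith [abs_nonneg U.det, sq_abs U.det, abs_mul U.det U.det]

lemma orth_isUnit_det {U : Matrix (Fin d) (Fin d) ℝ}
    (hU : U ∈ Matrix.orthogonalGroup (Fin d) ℝ) : IsUnit U.det :=
  isUnit_iff_ne_zero.2 (by
    intro h
    have := orth_abs_det hU
    rw [h, abs_zero] at this; norm_num at this)

lemma covMat_conj {D : Set (Fin d → ℝ)} (hm : MeasurableSet D)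
    (hbd : Bornology.IsBounded D) (hfin : volume D < ⊤)
    {U : Matrix (Fin d) (Fin d) ℝ} (hU : U ∈ Matrix.orthogonalGroup (Fin d) ℝ)
    (hUD : U.mulVec '' D = D) :
    covMat D = U * covMat D * Uᵀ := by
  set c := centroid D with hc
  have hdetU := orth_isUnit_det hU
  have hcU : U.mulVec c = c := by
    rw [hc, ← centroid_image U hdetU hm hbd hfin, hUD]
  ext i j
  have key : covMat D i j
      = ∫ x in D, ((U.mulVec x) i - c i) * ((U.mulVec x) j - c j) ∂volume := by
    conv_lhs => rw [covMat, Matrix.of_apply, ← hc, ← hUD]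
    rw [integral_image_mat U hdetU hm (fun x => (x i - c i) * (x j - c j)),
      orth_abs_det hU, one_smul]
  have expand : ∀ x : Fin d → ℝ,
      ((U.mulVec x) i - c i) * ((U.mulVec x) j - c j)
        = ∑ k, ∑ l, U i k * U j l * ((x k - c k) * (x l - c l)) := by
    intro x
    have h1 : ∀ a, (U.mulVec x) a - c a = ∑ k, U a k * (x k - c k) := by
      intro a
      conv_lhs => rw [← hcU]
      simp [Matrix.mulVec, dotProduct, mul_sub, Finset.sum_sub_distrib]
    rw [h1 i, h1 j, Finset.sum_mul_sum]
    exact Finset.sum_congr rfl fun k _ => Finset.sum_congr rfl fun l _ => by ring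
  simp only [expand] at key
  rw [key, integral_finset_sum _ (fun k _ =>
      integrable_finset_sum _ (fun l _ => (covMat_integrable D hbd c k l).const_mul _))]
  have : ∀ k, ∫ x in D, ∑ l, U i k * U j l * ((x k - c k) * (x l - c l)) ∂volume
      = ∑ l, U i k * U j l * covMat D k l := by
    intro k
    rw [integral_finset_sum _ (fun l _ => (covMat_integrable D hbd c k l).const_mul _)]
    exact Finset.sum_congr rfl fun l _ => by rw [integral_const_mul]; rfl
  simp only [this]
  simp [Matrix.mul_apply, Matrix.transpose_apply, Finset.mul_sum, Finset.sum_mul]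
  rw [Finset.sum_comm]
  exact Finset.sum_congr rfl fun k _ => Finset.sum_congr rfl fun l _ => by ring

lemma covMat_scalar (hd : 0 < d) {D : Set (Fin d → ℝ)} (hm : MeasurableSet D)
    (hbd : Bornology.IsBounded D) (hfin : volume D < ⊤)
    (hirr : ∀ x : Fin d → ℝ, x ≠ 0 →
      Submodule.span ℝ {w : Fin d → ℝ | ∃ U : Matrix (Fin d) (Fin d) ℝ,
        (U ∈ Matrix.orthogonalGroup (Fin d) ℝ ∧ U.mulVec '' D = D) ∧ w = U.mulVec x}
        = ⊤) :
    covMat D = (secondMoment D / d) • (1 : Matrix (Fin d) (Fin d) ℝ) := by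
  have hsym : (covMat D).IsHermitian := by
    ext i j
    simp only [Matrix.conjTranspose_apply, star_trivial, covMat, Matrix.of_apply]
    exact integral_congr_ae (Filter.Eventually.of_forall fun x => mul_comm _ _)
  set j0 : Fin d := ⟨0, hd⟩
  set μ := hsym.eigenvalues j0 with hμ
  have hv : covMat D *ᵥ ⇑(hsym.eigenvectorBasis j0) = μ • ⇑(hsym.eigenvectorBasis j0) :=
    hsym.mulVec_eigenvectorBasis j0
  have hv0 : ⇑(hsym.eigenvectorBasis j0) ≠ 0 := by
    intro h
    exact hsym.eigenvectorBasis.toBasis.ne_zero j0 (by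
      apply PiLp.ext; intro i; exact congrFun h i)
  -- eigenspace
  set E : Submodule ℝ (Fin d → ℝ) :=
    LinearMap.ker ((covMat D).mulVecLin - μ • LinearMap.id) with hE
  have memE : ∀ x, x ∈ E ↔ covMat D *ᵥ x = μ • x := by
    intro x
    simp [hE, LinearMap.mem_ker, sub_eq_zero, Matrix.mulVecLin]
  have hEtop : E = ⊤ := by
    rw [eq_top_iff, ← hirr _ hv0, Submodule.span_le]
    rintro w ⟨U, ⟨hU, hUD⟩, rfl⟩
    rw [SetLike.mem_coe, memE]
    have hcomm : covMat D * U = U * covMat D := by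
      have h1 := covMat_conj hm hbd hfin hU hUD
      have h2 : Uᵀ * U = 1 := by
        have := (Matrix.mem_orthogonalGroup_iff' (Fin d) ℝ).1 hU
        simpa [Matrix.star_eq_conjTranspose] using this
      calc covMat D * U = U * covMat D * Uᵀ * U := by rw [← h1]
        _ = U * covMat D * (Uᵀ * U) := by rw [Matrix.mul_assoc]
        _ = U * covMat D := by rw [h2, Matrix.mul_one]
    rw [Matrix.mulVec_mulVec, hcomm, ← Matrix.mulVec_mulVec, hv, Matrix.mulVec_smul]
  have heig : ∀ x, covMat D *ᵥ x = μ • x := by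
    intro x
    have : x ∈ E := hEtop ▸ Submodule.mem_top
    exact (memE x).1 this
  have hscalar : covMat D = μ • (1 : Matrix (Fin d) (Fin d) ℝ) := by
    ext i j
    have := congrFun (heig (Pi.single j 1)) i
    rw [Matrix.mulVec_single_one] at this
    simp only [Matrix.col_apply] at this
    rw [this]
    simp [Pi.single_apply, Matrix.one_apply, eq_comm]
  have htr : secondMoment D = d * μ := by
    rw [secondMoment_eq_trace D hbd, hscalar]
    simp [Matrix.smul_apply, Matrix.one_apply, Finset.sum_ite_eq, mul_comm]
  rw [hscalar, htr]
  congr 1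
  field_simp

lemma secondMoment_pos (hd : 0 < d) {D : Set (Fin d → ℝ)} (hm : MeasurableSet D)
    (hbd : Bornology.IsBounded D) (hpos : 0 < volume D) :
    0 < secondMoment D := by
  haveI : Nonempty (Fin d) := ⟨⟨0, hd⟩⟩
  set c := centroid D
  set f : (Fin d → ℝ) → ℝ := fun x => ∑ i, (x i - c i)^2 with hf
  have hnn : 0 ≤ᵐ[volume.restrict D] f :=
    Filter.Eventually.of_forall fun x => Finset.sum_nonneg fun i _ => sq_nonneg _
  have hint : IntegrableOn f D volume := integrableOn_cont (by fun_prop) hbd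
  rw [secondMoment, ← hf]
  rw [setIntegral_pos_iff_support_of_nonneg_ae hnn hint]
  have hsupp : D \ {c} ⊆ Function.support f ∩ D := by
    rintro x ⟨hxD, hxc⟩
    refine ⟨?_, hxD⟩
    simp only [Function.mem_support, hf]
    intro h0
    apply hxc
    have : ∀ i, (x i - c i)^2 = 0 := by
      intro i
      have := (Finset.sum_eq_zero_iff_of_nonneg (fun i _ => sq_nonneg (x i - c i))).1 h0
      exact this i (Finset.mem_univ i)
    have : x = c := funext fun i => by have := this i; nlinarith [this]
    simp [this]
  calc (0 : ENNReal) < volume D := hpos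
    _ = volume (D \ {c}) := by
        rw [measure_diff_null (measure_singleton c)]
    _ ≤ volume (Function.support f ∩ D) := measure_mono hsupp

set_option maxHeartbeats 1000000 in
/-- geometric interpretation of the Hilbert–Schmidt norm of `T⁻¹`. -/
theorem HS_norm_geometric {d : ℕ} (hd : 0 < d)
    (D : Set (Fin d → ℝ)) (hopen : IsOpen D) (hbd : Bornology.IsBounded D)
    (hpos : 0 < volume D) (hfin : volume D < ⊤)
    (hirr : ∀ x : Fin d → ℝ, x ≠ 0 →
      Submodule.span ℝ {w : Fin d → ℝ | ∃ U : Matrix (Fin d) (Fin d) ℝ,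
        (U ∈ Matrix.orthogonalGroup (Fin d) ℝ ∧ U.mulVec '' D = D) ∧ w = U.mulVec x}
        = ⊤)
    (T : Matrix (Fin d) (Fin d) ℝ) (hT : IsUnit T.det) :
    (1 / (d : ℝ)) * (∑ i, ∑ j, (T⁻¹ i j) ^ 2)
      = (vol D ^ ((1 : ℝ) + 4 / d) / secondMoment D)
        / (vol (T.mulVec '' D) ^ ((2 : ℝ) / d)
            * vol ((T⁻¹)ᵀ.mulVec '' D) ^ ((1 : ℝ) + 2 / d)
            / secondMoment ((T⁻¹)ᵀ.mulVec '' D)) := by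
  have hm : MeasurableSet D := hopen.measurableSet
  set V : ℝ := vol D with hV
  set I : ℝ := secondMoment D with hI
  set a : ℝ := |T.det| with ha
  set S : Matrix (Fin d) (Fin d) ℝ := (T⁻¹)ᵀ with hS
  have hdT : T.det ≠ 0 := by simpa using hT.ne_zero
  have hapos : 0 < a := abs_pos.2 hdT
  have hVpos : 0 < V := ENNReal.toReal_pos hpos.ne' hfin.ne
  have hIpos : 0 < I := secondMoment_pos hd hm hbd hpos
  have hdpos : (0:ℝ) < d := Nat.cast_pos.2 hd
  have hSdet : |S.det| = a⁻¹ := by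
    rw [hS, Matrix.det_transpose, Matrix.det_nonsing_inv, Ring.inverse_eq_inv', abs_inv, ha]
  have hSunit : IsUnit S.det := by
    rw [isUnit_iff_ne_zero]
    intro h
    rw [h, abs_zero] at hSdet
    exact (inv_pos.2 hapos).ne' hSdet.symm
  -- volumes
  have hvT : vol (T.mulVec '' D) = a * V := vol_image_mat' T hfin
  have hvS : vol (S.mulVec '' D) = a⁻¹ * V := by rw [vol_image_mat' S hfin, hSdet]
  -- covariance
  have hcov := covMat_scalar hd hm hbd hfin hirr
  set N : ℝ := ∑ i, ∑ j, (T⁻¹ i j) ^ 2 with hN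
  have hsm : secondMoment (S.mulVec '' D) = a⁻¹ * ((I / d) * N) := by
    rw [secondMoment_image S hSunit hm hbd hfin, hSdet, hcov]
    congr 1
    have hterm : ∀ i k : Fin d, ∑ l, S i k * S i l
        * (((secondMoment D / d) • (1 : Matrix (Fin d) (Fin d) ℝ)) k l)
        = (I / d) * S i k ^ 2 := by
      intro i k
      simp only [Matrix.smul_apply, Matrix.one_apply, smul_eq_mul, mul_ite, mul_one, mul_zero,
        Finset.sum_ite_eq, Finset.mem_univ, if_true, ← hI]
      ring
    simp only [hterm]
    have hSe : ∀ i k : Fin d, (I/(d:ℝ)) * S i k ^ 2 = (I/(d:ℝ)) * T⁻¹ k i ^ 2 :=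
      fun i k => by rw [hS]; rfl
    simp only [hSe]
    rw [Finset.sum_comm, hN, Finset.mul_sum]
    exact Finset.sum_congr rfl fun i _ => (Finset.mul_sum _ _ _).symm
  have hNpos : 0 < N := by
    have h1 : T⁻¹ * T = 1 := Matrix.nonsing_inv_mul T hT
    have h2 : T⁻¹ ≠ 0 := by
      intro h
      have := congrFun (congrFun (h ▸ h1 : (0 : Matrix (Fin d) (Fin d) ℝ) * T = 1) ⟨0, hd⟩) ⟨0, hd⟩
      simp [Matrix.one_apply] at this
    obtain ⟨i, hi⟩ := Function.ne_iff.1 h2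
    obtain ⟨j, hj⟩ := Function.ne_iff.1 hi
    rw [hN]
    refine Finset.sum_pos' (fun i _ => Finset.sum_nonneg fun j _ => sq_nonneg _) ⟨i, Finset.mem_univ i, ?_⟩
    refine Finset.sum_pos' (fun j _ => sq_nonneg _) ⟨j, Finset.mem_univ j, ?_⟩
    have : T⁻¹ i j ≠ 0 := by simpa using hj
    positivity
  -- final algebra
  rw [hvT, hvS, hsm]
  set p : ℝ := 2 / d with hp
  set q : ℝ := 1 + 2 / d with hq
  set α : ℝ := 1 + 4 / d with hα
  have hrw : (a * V) ^ p * (a⁻¹ * V) ^ q = a⁻¹ * V ^ α := by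
    rw [Real.mul_rpow hapos.le hVpos.le, Real.mul_rpow (inv_nonneg.2 hapos.le) hVpos.le,
      Real.inv_rpow hapos.le]
    have h1 : a ^ p * (a ^ q)⁻¹ = a⁻¹ := by
      rw [← Real.rpow_neg hapos.le, ← Real.rpow_add hapos,
        show p + -q = -1 by rw [hp, hq]; ring, Real.rpow_neg_one]
    have h2 : V ^ p * V ^ q = V ^ α := by
      rw [← Real.rpow_add hVpos]
      congr 1
      rw [hp, hq, hα]; ring
    calc a ^ p * V ^ p * ((a ^ q)⁻¹ * V ^ q)
        = (a ^ p * (a ^ q)⁻¹) * (V ^ p * V ^ q) := by ring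
      _ = a⁻¹ * V ^ α := by rw [h1, h2]
  rw [hrw]
  have hVα : (0:ℝ) < V ^ α := Real.rpow_pos_of_pos hVpos α
  field_simp
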